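/- For all real (or formal) x, y and |θ| < 1, the Gauss hypergeometric function ψ_x(θ) = ₂F₁(x/2, (1+x)/2; 1+x; θ) equals (2/(1+√(1−θ)))^x, and consequently ψ_x(θ)·ψ_y(θ) = ψ_{x+y}(θ); extracting Taylor coefficients in θ yields: for all m ≥ 0 and j,k ≥ 1, Σ_{s=0}^{m} C(m,s)·(j·(2s+j−1)!/(s+j)!)·(k·(2(m−s)+k−1)!/((m−s)+k)!) = (j+k)·(2m+j+k−1)!/(m+j+k)!. -/

import Mathlib

open PowerSeries Finset

noncomputable section AuxStmt18

/-- `A j n = j (2n+j-1)! / (n! (n+j)!)`, the coefficient of `θ^n` in `C(θ)^j`. -/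
def Acoef (j n : ℕ) : ℚ :=
  (j : ℚ) * ((2 * n + j - 1).factorial : ℚ) /
    ((n.factorial : ℚ) * ((n + j).factorial : ℚ))

lemma fact_ne (n : ℕ) : ((n.factorial : ℚ)) ≠ 0 := by
  exact_mod_cast n.factorial_ne_zero

lemma Acoef_zero (i : ℕ) : Acoef (i + 1) 0 = 1 := by
  have : (0 + (i + 1)).factorial = (i + 1) * i.factorial := by
    simp [Nat.factorial_succ]
  simp only [Acoef, this]
  have h2 : 2 * 0 + (i + 1) - 1 = i := by omega
  rw [h2]
  rw [Nat.factorial_zero]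
  push_cast
  field_simp

lemma catalan_cast (n : ℕ) :
    (catalan n : ℚ) = Acoef 1 n := by
  have h := succ_mul_catalan_eq_centralBinom n
  have h2 : n.centralBinom * (n.factorial * n.factorial) = (2 * n).factorial := by
    rw [Nat.centralBinom]
    have := Nat.choose_mul_factorial_mul_factorial (show n ≤ 2 * n by omega)
    have h3 : 2 * n - n = n := by omega
    rw [h3] at this
    linarith [this]
  have key : ((n + 1) * catalan n : ℕ) * (n.factorial * n.factorial) = (2 * n).factorial := by
    rw [h]; exact h2
  have keyQ : ((n : ℚ) + 1) * (catalan n : ℚ) * ((n.factorial : ℚ) * (n.factorial : ℚ))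
      = ((2 * n).factorial : ℚ) := by exact_mod_cast key
  have h4 : 2 * n + 1 - 1 = 2 * n := by omega
  have h5 : (n + 1).factorial = (n + 1) * n.factorial := Nat.factorial_succ n
  simp only [Acoef, h4, h5]
  push_cast
  field_simp
  nlinarith [keyQ]

lemma Acoef_rec (i n : ℕ) : Acoef (i + 2) (n + 1) = Acoef (i + 1) (n + 1) + Acoef (i + 3) n := by
  simp only [Acoef]
  have e1 : 2 * (n + 1) + (i + 2) - 1 = (2 * n + i + 2) + 1 := by omega
  have e2 : 2 * (n + 1) + (i + 1) - 1 = 2 * n + i + 2 := by omega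
  have e3 : 2 * n + (i + 3) - 1 = 2 * n + i + 2 := by omega
  have e4 : n + 1 + (i + 2) = (n + i + 2) + 1 := by omega
  have e5 : n + 1 + (i + 1) = n + i + 2 := by omega
  have e6 : n + (i + 3) = (n + i + 2) + 1 := by omega
  rw [e1, e2, e3, e4, e5, e6]
  rw [Nat.factorial_succ (2 * n + i + 2), Nat.factorial_succ (n + i + 2),
    Nat.factorial_succ n]
  push_cast
  have h1 := fact_ne (2 * n + i + 2)
  have h2 := fact_ne (n + i + 2)
  have h3 := fact_ne n
  field_simp
  ring

/-- The Catalan generating function. -/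
def catGF : PowerSeries ℚ := PowerSeries.mk fun n => (catalan n : ℚ)

lemma catGF_eq : catGF = 1 + X * catGF ^ 2 := by
  ext n
  cases n with
  | zero => simp [catGF]
  | succ n =>
      rw [map_add, coeff_succ_X_mul]
      simp only [catGF, coeff_mk, sq, coeff_mul, coeff_mk]
      rw [PowerSeries.coeff_one]
      simp only [Nat.succ_ne_zero, if_false, zero_add]
      rw [catalan_succ' n]
      push_cast
      rfl

lemma catGF_pow_succ (i : ℕ) : catGF ^ (i + 2) = catGF ^ (i + 1) + X * catGF ^ (i + 3) := by
  have h : catGF ^ (i + 2) = catGF ^ (i + 1) * (1 + X * catGF ^ 2) := by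
    rw [← catGF_eq, ← pow_succ]
  rw [h]
  ring

lemma coeff_catGF_pow : ∀ n j : ℕ, PowerSeries.coeff n (catGF ^ (j + 1)) = Acoef (j + 1) n := by
  intro n
  induction n with
  | zero =>
      intro j
      rw [coeff_zero_eq_constantCoeff, map_pow]
      have : constantCoeff catGF = 1 := by simp [catGF]
      rw [this, one_pow, Acoef_zero]
  | succ n ih =>
      intro j
      induction j with
      | zero =>
          simp only [zero_add, pow_one, catGF, coeff_mk]
          exact catalan_cast (n + 1)
      | succ i ihj =>
          rw [catGF_pow_succ i, map_add, coeff_succ_X_mul, ihj, ih (i + 2), Acoef_rec]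

end AuxStmt18

/-- The finitary consequence of the multiplicativity `ψ_x(θ)·ψ_y(θ) = ψ_{x+y}(θ)` of the
Gauss hypergeometric function `ψ_x(θ) = ₂F₁(x/2,(1+x)/2;1+x;θ) = (2/(1+√(1-θ)))^x`:
for all `m ≥ 0` and `j, k ≥ 1`,
`Σ_{s=0}^{m} C(m,s)·(j·(2s+j-1)!/(s+j)!)·(k·(2(m-s)+k-1)!/((m-s)+k)!)
  = (j+k)·(2m+j+k-1)!/(m+j+k)!`. -/
theorem stmt18 (m j k : ℕ) (hj : 1 ≤ j) (hk : 1 ≤ k) :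
    ∑ s ∈ Finset.range (m + 1),
      (m.choose s : ℚ) * ((j : ℚ) * ((2 * s + j - 1).factorial : ℚ) / ((s + j).factorial : ℚ)) *
        ((k : ℚ) * ((2 * (m - s) + k - 1).factorial : ℚ) / (((m - s) + k).factorial : ℚ))
    = ((j : ℚ) + (k : ℚ)) * ((2 * m + j + k - 1).factorial : ℚ) / ((m + j + k).factorial : ℚ) := by
  obtain ⟨j', rfl⟩ : ∃ j', j = j' + 1 := ⟨j - 1, by omega⟩
  obtain ⟨k', rfl⟩ : ∃ k', k = k' + 1 := ⟨k - 1, by omega⟩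
  have key : ∑ s ∈ Finset.range (m + 1), Acoef (j' + 1) s * Acoef (k' + 1) (m - s)
      = Acoef (j' + 1 + (k' + 1)) m := by
    have h1 : PowerSeries.coeff m (catGF ^ (j' + 1) * catGF ^ (k' + 1))
        = Acoef (j' + 1 + (k' + 1)) m := by
      rw [← pow_add]
      have : j' + 1 + (k' + 1) = (j' + k' + 1) + 1 := by omega
      rw [this, coeff_catGF_pow]
    rw [PowerSeries.coeff_mul, Finset.Nat.sum_antidiagonal_eq_sum_range_succ_mk] at h1
    simp only [coeff_catGF_pow] at h1
    exact h1
  calc ∑ s ∈ Finset.range (m + 1),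
      (m.choose s : ℚ) * ((j' + 1 : ℕ) * ((2 * s + (j' + 1) - 1).factorial : ℚ) / ((s + (j' + 1)).factorial : ℚ))
        * ((k' + 1 : ℕ) * ((2 * (m - s) + (k' + 1) - 1).factorial : ℚ) / (((m - s) + (k' + 1)).factorial : ℚ))
      = ∑ s ∈ Finset.range (m + 1),
        (m.factorial : ℚ) * (Acoef (j' + 1) s * Acoef (k' + 1) (m - s)) := by
        apply Finset.sum_congr rfl
        intro s hs
        have hsm : s ≤ m := by
          have := Finset.mem_range.mp hs; omega
        rw [Nat.cast_choose ℚ hsm]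
        simp only [Acoef]
        have h1 := fact_ne s
        have h2 := fact_ne (m - s)
        have h3 := fact_ne (s + (j' + 1))
        have h4 := fact_ne ((m - s) + (k' + 1))
        field_simp
    _ = (m.factorial : ℚ) * Acoef (j' + 1 + (k' + 1)) m := by
        rw [← Finset.mul_sum, key]
    _ = ((j' + 1 : ℕ) + (k' + 1 : ℕ) : ℚ) * ((2 * m + (j' + 1) + (k' + 1) - 1).factorial : ℚ)
        / ((m + (j' + 1) + (k' + 1)).factorial : ℚ) := by
        simp only [Acoef]
        have e1 : 2 * m + (j' + 1 + (k' + 1)) - 1 = 2 * m + (j' + 1) + (k' + 1) - 1 := by omega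
        have e2 : m + (j' + 1 + (k' + 1)) = m + (j' + 1) + (k' + 1) := by omega
        rw [e1, e2]
        have h1 := fact_ne m
        have h2 := fact_ne (m + (j' + 1) + (k' + 1))
        push_cast
        field_simp
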